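/- Fix an integer k ≥ 2. Let σ be a uniformly distributed random permutation of {0, 1, …, k−1}, let V_1, V_2 be i.i.d. Uniform(0,1) random variables independent of σ, and set U_j = (σ(j) + V_j)/k for j = 1, 2 (where σ(1), σ(2) denote the images of two fixed distinct elements under σ). Then each U_j is distributed Uniform(0,1), and for all 0 ≤ u ≤ v ≤ 1 the joint CDF F(u,v) = P(U_1 ≤ u, U_2 ≤ v) is given by: F(u,v) = 0 if ⌊kv⌋ = 0; F(u,v) = (ku(kv − 1) − {ku}({kv} − 1))/(k(k−1)) if 0 < ⌊kv⌋ = ⌊ku⌋; and F(u,v) = u(kv − 1)/(k−1) if ⌊kv⌋ > ⌊ku⌋. Here ⌊x⌋ and {x} denote the integer part and the fractional part of x. -/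

import Mathlib

open MeasureTheory ProbabilityTheory
open Finset

section auxGcl

noncomputable def gcl (x : ℝ) : ℝ := min (max x 0) 1

lemma gcl_nonneg (x : ℝ) : 0 ≤ gcl x := le_min (le_max_right _ _) zero_le_one
lemma gcl_of_nonpos {x : ℝ} (h : x ≤ 0) : gcl x = 0 := by
  simp [gcl, max_eq_right h, min_eq_left (zero_le_one (α := ℝ))]
lemma gcl_of_one_le {x : ℝ} (h : 1 ≤ x) : gcl x = 1 := by
  simp [gcl, max_eq_left (le_trans zero_le_one h), min_eq_right h]
lemma gcl_of_mem {x : ℝ} (h0 : 0 ≤ x) (h1 : x ≤ 1) : gcl x = x := by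
  simp [gcl, max_eq_left h0, min_eq_left h1]

lemma restrict_Iic_gcl (c : ℝ) :
    (volume.restrict (Set.Ioo (0 : ℝ) 1)) (Set.Iic c) = ENNReal.ofReal (gcl c) := by
  rw [Measure.restrict_apply measurableSet_Iic]
  rcases le_or_gt c 0 with h | h
  · have : Set.Iic c ∩ Set.Ioo (0:ℝ) 1 = ∅ := by
      ext x; simp only [Set.mem_inter_iff, Set.mem_Iic, Set.mem_Ioo, Set.mem_empty_iff_false,
        iff_false, not_and]
      intro hx h0 h1; linarith
    rw [this, gcl_of_nonpos h]; simp
  rcases le_or_gt 1 c with h1 | h1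
  · have : Set.Iic c ∩ Set.Ioo (0:ℝ) 1 = Set.Ioo 0 1 := by
      ext x; simp only [Set.mem_inter_iff, Set.mem_Iic, Set.mem_Ioo]
      constructor
      · tauto
      · intro hx; exact ⟨by linarith [hx.2], hx⟩
    rw [this, gcl_of_one_le h1, Real.volume_Ioo]; norm_num
  · have : Set.Iic c ∩ Set.Ioo (0:ℝ) 1 = Set.Ioc 0 c := by
      ext x; simp only [Set.mem_inter_iff, Set.mem_Iic, Set.mem_Ioo, Set.mem_Ioc]
      constructor
      · rintro ⟨hc, h0, _⟩; exact ⟨h0, hc⟩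
      · rintro ⟨h0, hc⟩; exact ⟨hc, h0, by linarith⟩
    rw [this, Real.volume_Ioc, gcl_of_mem h.le h1.le]; simp

lemma sum_gcl_mul (k : ℕ) {x y : ℝ} (hx0 : 0 ≤ x) (hxy : x ≤ y) (hyk : y ≤ k) :
    ∑ m ∈ range k, gcl (x - m) * gcl (y - m)
      = (⌊x⌋ : ℝ) + Int.fract x * gcl (y - ⌊x⌋) := by
  have hfl0 : 0 ≤ ⌊x⌋ := Int.floor_nonneg.2 hx0
  set n : ℕ := ⌊x⌋.toNat with hn
  have hncast : (n : ℝ) = (⌊x⌋ : ℝ) := by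
    rw [hn]; exact_mod_cast congrArg Int.cast (Int.toNat_of_nonneg hfl0)
  have hnle : (n : ℝ) ≤ x := hncast ▸ Int.floor_le x
  have hnk : n ≤ k := by
    have : (n : ℝ) ≤ (k : ℝ) := le_trans hnle (le_trans hxy hyk)
    exact_mod_cast this
  have hfract : x - n = Int.fract x := by rw [hncast]; exact (Int.self_sub_floor x).symm
  set c : ℝ := Int.fract x * gcl (y - ⌊x⌋) with hc
  have key : ∀ m ∈ range k, gcl (x - m) * gcl (y - m)
      = (if m < n then (1:ℝ) else 0) + (if m = n then c else 0) := by
    intro m hm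
    rcases lt_trichotomy m n with h | h | h
    · have h1 : (1:ℝ) ≤ x - m := by
        have : (m : ℝ) + 1 ≤ n := by exact_mod_cast Nat.succ_le_of_lt h
        linarith
      rw [gcl_of_one_le h1, gcl_of_one_le (by linarith : (1:ℝ) ≤ y - m)]
      simp [h, Nat.ne_of_lt h]
    · have h2 : gcl (x - n) = Int.fract x := by
        rw [hfract, gcl_of_mem (Int.fract_nonneg x) (Int.fract_lt_one x).le]
      have h3 : y - (n:ℝ) = y - (⌊x⌋:ℝ) := by rw [hncast]
      rw [h, h2, h3]
      simp [hc, lt_irrefl]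
    · have h0 : x - m ≤ 0 := by
        have : x < n + 1 := by
          rw [hncast]; exact Int.lt_floor_add_one x
        have h' : (n:ℝ) + 1 ≤ m := by exact_mod_cast Nat.succ_le_of_lt h
        linarith
      rw [gcl_of_nonpos h0, zero_mul]
      have := Nat.lt_asymm h
      simp [Nat.ne_of_gt h, this]
  rw [Finset.sum_congr rfl key, Finset.sum_add_distrib]
  have h1 : ∑ m ∈ range k, (if m < n then (1:ℝ) else 0) = n := by
    rw [← Finset.sum_subset (Finset.range_subset_range.2 hnk)
      (by intro m hm hmn; simp at hmn ⊢; omega)]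
    rw [Finset.sum_ite_of_true (fun m hm => Finset.mem_range.1 hm)]
    simp
  have h2 : ∑ m ∈ range k, (if m = n then c else 0) = (if n ∈ range k then c else 0) := by
    exact Finset.sum_ite_eq' _ _ _
  rw [h1, h2, hncast]
  rcases lt_or_ge n k with h | h
  · simp [Finset.mem_range, h]
  · have hnk' : n = k := le_antisymm hnk h
    have hxk : x = k := by
      have : (k:ℝ) ≤ x := by rw [← hnk']; exact hnle
      linarith [le_trans hxy hyk]
    have : Int.fract x = 0 := by rw [hxk]; exact_mod_cast Int.fract_natCast k
    simp [hc, this]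

lemma sum_gcl (k : ℕ) {x : ℝ} (hx0 : 0 ≤ x) (hxk : x ≤ k) :
    ∑ m ∈ range k, gcl (x - m) = x := by
  have h := sum_gcl_mul k hx0 hxk le_rfl
  have heq : ∀ m ∈ range k, gcl (x - m) = gcl (x - m) * gcl ((k:ℝ) - m) := by
    intro m hm
    have hm' : m < k := Finset.mem_range.1 hm
    have : (1:ℝ) ≤ (k:ℝ) - m := by
      have : (m:ℝ) + 1 ≤ k := by exact_mod_cast Nat.succ_le_of_lt hm'
      linarith
    rw [gcl_of_one_le this, mul_one]
  rw [Finset.sum_congr rfl heq, h]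
  rcases lt_or_ge x k with hlt | hge
  · have : ⌊x⌋ < (k:ℤ) := by exact_mod_cast Int.floor_lt.2 (by exact_mod_cast hlt)
    have h1 : (1:ℝ) ≤ (k:ℝ) - ⌊x⌋ := by
      have : (⌊x⌋:ℝ) + 1 ≤ k := by exact_mod_cast this
      linarith
    rw [gcl_of_one_le h1, mul_one]
    exact (Int.floor_add_fract x)
  · have hxk' : x = k := le_antisymm hxk hge
    have h0 : Int.fract x = 0 := by rw [hxk']; exact_mod_cast Int.fract_natCast k
    rw [h0, zero_mul, add_zero, hxk']
    norm_num

lemma sum_gcl_scaled (k : ℕ) (hk : 1 ≤ k) (t : ℝ) :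
    ∑ m ∈ range k, gcl ((k:ℝ) * t - m) = k * gcl t := by
  have hk0 : (0:ℝ) < k := by exact_mod_cast hk
  rcases le_or_gt t 0 with h | h
  · rw [gcl_of_nonpos h, mul_zero]
    apply Finset.sum_eq_zero
    intro m hm
    apply gcl_of_nonpos
    have : (k:ℝ) * t ≤ 0 := mul_nonpos_of_nonneg_of_nonpos hk0.le h
    have : (0:ℝ) ≤ m := Nat.cast_nonneg m
    linarith
  rcases le_or_gt 1 t with h1 | h1
  · rw [gcl_of_one_le h1, mul_one]
    rw [Finset.sum_congr rfl (fun m hm => gcl_of_one_le (by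
      have hm' : m < k := Finset.mem_range.1 hm
      have h2 : (m:ℝ) + 1 ≤ k := by exact_mod_cast Nat.succ_le_of_lt hm'
      have h3 : (k:ℝ) ≤ k * t := le_mul_of_one_le_right hk0.le h1
      linarith))]
    simp
  · rw [gcl_of_mem h.le h1.le]
    exact sum_gcl k (by positivity) (by nlinarith)

end auxGcl

section auxPerm

variable {α : Type*} [Fintype α] [DecidableEq α]

lemma exists_perm_two {m n m' n' : α} (h : m ≠ n) (h' : m' ≠ n') :
    ∃ τ : Equiv.Perm α, τ m = m' ∧ τ n = n' := by
  refine ⟨Equiv.swap (Equiv.swap m m' n) n' * Equiv.swap m m', ?_, ?_⟩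
  · have h1 : m' ≠ Equiv.swap m m' n := by
      intro hcontra
      have : Equiv.swap m m' m = Equiv.swap m m' n := by
        rw [Equiv.swap_apply_left]; exact hcontra
      exact h ((Equiv.swap m m').injective this)
    show Equiv.swap (Equiv.swap m m' n) n' (Equiv.swap m m' m) = m'
    rw [Equiv.swap_apply_left]
    exact Equiv.swap_apply_of_ne_of_ne h1 h'
  · show Equiv.swap (Equiv.swap m m' n) n' (Equiv.swap m m' n) = n'
    exact Equiv.swap_apply_left _ _

lemma nab_const (a b : α) {m n m' n' : α} (h : m ≠ n) (h' : m' ≠ n') :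
    (univ.filter fun π : Equiv.Perm α => π a = m ∧ π b = n).card
      = (univ.filter fun π : Equiv.Perm α => π a = m' ∧ π b = n').card := by
  obtain ⟨τ, h1, h2⟩ := exists_perm_two h h'
  refine Finset.card_bij' (fun π _ => τ * π) (fun π _ => τ⁻¹ * π) ?_ ?_ ?_ ?_
  · intro π hπ
    simp only [mem_filter, mem_univ, true_and] at hπ ⊢
    simp [Equiv.Perm.mul_apply, hπ.1, hπ.2, h1, h2]
  · intro π hπ
    simp only [mem_filter, mem_univ, true_and] at hπ ⊢
    constructor
    · rw [Equiv.Perm.mul_apply, hπ.1, ← h1]; simp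
    · rw [Equiv.Perm.mul_apply, hπ.2, ← h2]; simp
  · intro π _; simp [mul_assoc, ← mul_assoc]
  · intro π _; simp [← mul_assoc]

lemma nab_zero {a b : α} (hab : a ≠ b) (m : α) :
    (univ.filter fun π : Equiv.Perm α => π a = m ∧ π b = m).card = 0 := by
  rw [Finset.card_eq_zero, Finset.filter_eq_empty_iff]
  rintro π - ⟨h1, h2⟩
  exact hab (π.injective (h1.trans h2.symm))

lemma nab_mul {a b m n : α} (hab : a ≠ b) (hmn : m ≠ n) :
    (univ.filter fun π : Equiv.Perm α => π a = m ∧ π b = n).card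
      * (Fintype.card α * (Fintype.card α - 1)) = (Fintype.card α).factorial := by
  set N := (univ.filter fun π : Equiv.Perm α => π a = m ∧ π b = n).card with hN
  have hsum : (Fintype.card α).factorial
      = ∑ p : α × α, (univ.filter fun π : Equiv.Perm α => (π a, π b) = p).card := by
    rw [← Fintype.card_perm, ← Finset.card_univ]
    exact Finset.card_eq_sum_card_fiberwise (fun π _ => Finset.mem_univ _)
  have hfib : ∀ p : α × α, (univ.filter fun π : Equiv.Perm α => (π a, π b) = p).card
      = (univ.filter fun π : Equiv.Perm α => π a = p.1 ∧ π b = p.2).card := by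
    intro p
    congr 1
    apply Finset.filter_congr
    intro π _
    simp [Prod.ext_iff]
  rw [hsum, Fintype.sum_prod_type]
  refine Eq.symm ?_
  have hrow : ∀ m' : α, ∑ n' : α, (univ.filter fun π : Equiv.Perm α => (π a, π b) = (m', n')).card
      = (Fintype.card α - 1) * N := by
    intro m'
    have : ∀ n' : α, (univ.filter fun π : Equiv.Perm α => (π a, π b) = (m', n')).card
        = if n' = m' then 0 else N := by
      intro n'
      rw [hfib (m', n')]
      by_cases h' : n' = m'
      · simp only [h', if_pos rfl]
        exact nab_zero hab m'
      · rw [if_neg h', hN]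
        exact nab_const a b (fun hc => h' hc.symm) hmn
    calc ∑ n' : α, (univ.filter fun π : Equiv.Perm α => (π a, π b) = (m', n')).card
        = ∑ n' : α, (if n' = m' then 0 else N) := Finset.sum_congr rfl (fun n' _ => this n')
      _ = (if m' = m' then 0 else N) + ∑ n' ∈ univ.erase m', (if n' = m' then 0 else N) :=
          (Finset.add_sum_erase univ (fun n' => if n' = m' then 0 else N)
            (Finset.mem_univ m')).symm
      _ = ∑ n' ∈ univ.erase m', N := by
          rw [if_pos rfl, zero_add]
          exact Finset.sum_congr rfl (fun n' hn' => if_neg (Finset.mem_erase.1 hn').1)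
      _ = (Fintype.card α - 1) * N := by
          rw [Finset.sum_const, Finset.card_erase_of_mem (Finset.mem_univ m'), Finset.card_univ,
            smul_eq_mul]
  calc ∑ m' : α, ∑ n' : α, (univ.filter fun π : Equiv.Perm α => (π a, π b) = (m', n')).card
      = ∑ _m' : α, (Fintype.card α - 1) * N := Finset.sum_congr rfl (fun m' _ => hrow m')
    _ = Fintype.card α * ((Fintype.card α - 1) * N) := by
        rw [Finset.sum_const, Finset.card_univ, smul_eq_mul]
    _ = N * (Fintype.card α * (Fintype.card α - 1)) := by ring

lemma na_const (a : α) (m m' : α) :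
    (univ.filter fun π : Equiv.Perm α => π a = m).card
      = (univ.filter fun π : Equiv.Perm α => π a = m').card := by
  refine Finset.card_bij' (fun π _ => Equiv.swap m m' * π) (fun π _ => Equiv.swap m m' * π)
    ?_ ?_ ?_ ?_
  · intro π hπ
    simp only [mem_filter, mem_univ, true_and] at hπ ⊢
    simp [Equiv.Perm.mul_apply, hπ]
  · intro π hπ
    simp only [mem_filter, mem_univ, true_and] at hπ ⊢
    simp [Equiv.Perm.mul_apply, hπ, Equiv.swap_apply_right]
  · intro π _
    ext x
    simp [Equiv.Perm.mul_apply]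
  · intro π _
    ext x
    simp [Equiv.Perm.mul_apply]

lemma na_mul (a m : α) :
    (univ.filter fun π : Equiv.Perm α => π a = m).card * Fintype.card α
      = (Fintype.card α).factorial := by
  have hsum : (Fintype.card α).factorial
      = ∑ m' : α, (univ.filter fun π : Equiv.Perm α => π a = m').card := by
    rw [← Fintype.card_perm, ← Finset.card_univ]
    exact Finset.card_eq_sum_card_fiberwise (fun π _ => Finset.mem_univ _)
  rw [hsum]
  refine Eq.symm ?_
  calc ∑ m' : α, (univ.filter fun π : Equiv.Perm α => π a = m').card
      = ∑ _m' : α, (univ.filter fun π : Equiv.Perm α => π a = m).card :=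
        Finset.sum_congr rfl (fun m' _ => na_const a m' m)
    _ = (univ.filter fun π : Equiv.Perm α => π a = m).card * Fintype.card α := by
        rw [Finset.sum_const, Finset.card_univ, smul_eq_mul, mul_comm]

end auxPerm


instance {k : ℕ} : MeasurableSpace (Equiv.Perm (Fin k)) := ⊤

/-- Value types for the joint family consisting of the two uniforms and the random
permutation. -/
def lhsβ (k : ℕ) : Fin 2 ⊕ Unit → Type
  | Sum.inl _ => ℝ
  | Sum.inr _ => Equiv.Perm (Fin k)

instance lhsβMeasurableSpace (k : ℕ) : ∀ x, MeasurableSpace (lhsβ k x)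
  | Sum.inl _ => (inferInstance : MeasurableSpace ℝ)
  | Sum.inr _ => (inferInstance : MeasurableSpace (Equiv.Perm (Fin k)))

/-- The joint family consisting of the two uniforms and the random permutation. -/
def lhsFam {Ω : Type*} {k : ℕ} (V : Fin 2 → Ω → ℝ)
    (σ : Ω → Equiv.Perm (Fin k)) : ∀ x : Fin 2 ⊕ Unit, Ω → lhsβ k x
  | Sum.inl i => V i
  | Sum.inr _ => σ

/-- One step of Latin hypercube sampling: for a uniform random permutation `σ` of
`{0, …, k−1}` and i.i.d. Uniform(0,1) variables `V₁, V₂` independent of `σ`, the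
variables `U_j = (σ(a_j) + V_j)/k` (for two fixed distinct elements `a₁ ≠ a₂`) are each
Uniform(0,1), and their joint CDF on `0 ≤ u ≤ v ≤ 1` is given by the displayed
three-case formula. -/
theorem lhs_pair_cdf {Ω : Type*} [MeasurableSpace Ω] (μ : Measure Ω)
    [IsProbabilityMeasure μ] {k : ℕ} (hk : 2 ≤ k)
    (V : Fin 2 → Ω → ℝ) (σ : Ω → Equiv.Perm (Fin k))
    (hVm : ∀ i, Measurable (V i)) (hσm : Measurable σ)
    (hVlaw : ∀ i, μ.map (V i) = volume.restrict (Set.Ioo (0 : ℝ) 1))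
    (hσlaw : ∀ π : Equiv.Perm (Fin k), μ {ω | σ ω = π} = ((Nat.factorial k : ENNReal))⁻¹)
    (hindep : iIndepFun (lhsFam V σ) μ)
    (a b : Fin k) (hab : a ≠ b) :
    (∀ j : Fin 2,
      μ.map (fun ω => (((σ ω (![a, b] j) : ℕ) : ℝ) + V j ω) / k) =
        volume.restrict (Set.Ioo (0 : ℝ) 1)) ∧
    (∀ u v : ℝ, 0 ≤ u → u ≤ v → v ≤ 1 →
      (μ {ω | (((σ ω a : ℕ) : ℝ) + V 0 ω) / k ≤ u ∧
              (((σ ω b : ℕ) : ℝ) + V 1 ω) / k ≤ v}).toReal =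
        if ⌊(k : ℝ) * v⌋ = 0 then 0
        else if ⌊(k : ℝ) * u⌋ = ⌊(k : ℝ) * v⌋ then
          ((k : ℝ) * u * ((k : ℝ) * v - 1) -
            Int.fract ((k : ℝ) * u) * (Int.fract ((k : ℝ) * v) - 1)) /
            ((k : ℝ) * ((k : ℝ) - 1))
        else u * ((k : ℝ) * v - 1) / ((k : ℝ) - 1)) := by

  classical
  have hk0 : (0:ℝ) < k := by
    have : (0:ℕ) < k := by omega
    exact_mod_cast this
  have hkne : (k:ℝ) ≠ 0 := ne_of_gt hk0
  have hk1ne : (k:ℝ) - 1 ≠ 0 := by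
    have : (2:ℝ) ≤ k := by exact_mod_cast hk
    intro h; linarith
  have hfne : (Nat.factorial k : ENNReal) ≠ 0 := by
    exact_mod_cast (Nat.factorial_pos k).ne'
  -- master independence identity
  have master : ∀ (S0 S1 : Set ℝ), MeasurableSet S0 → MeasurableSet S1 →
      ∀ T : Set (Equiv.Perm (Fin k)),
      μ ((V 0)⁻¹' S0 ∩ ((V 1)⁻¹' S1 ∩ σ⁻¹' T))
        = μ ((V 0)⁻¹' S0) * (μ ((V 1)⁻¹' S1) * μ (σ⁻¹' T)) := by
    intro S0 S1 hS0 hS1 T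
    set s : Fin 2 ⊕ Unit → Set Ω :=
      Sum.elim (fun i => ![(V 0)⁻¹' S0, (V 1)⁻¹' S1] i) (fun _ => σ⁻¹' T) with hs
    have hmeas : ∀ i, MeasurableSet[(lhsβMeasurableSpace k i).comap (lhsFam V σ i)] (s i) := by
      rintro (i | u)
      · fin_cases i
        · exact ⟨S0, hS0, rfl⟩
        · exact ⟨S1, hS1, rfl⟩
      · exact ⟨T, trivial, rfl⟩
    have h := hindep.meas_iInter hmeas
    have hint : ⋂ i, s i = (V 0)⁻¹' S0 ∩ ((V 1)⁻¹' S1 ∩ σ⁻¹' T) := by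
      ext ω
      simp only [Set.mem_iInter, Set.mem_inter_iff]
      constructor
      · intro hω
        exact ⟨hω (Sum.inl 0), hω (Sum.inl 1), hω (Sum.inr ())⟩
      · rintro ⟨h0, h1, h2⟩ (i | u)
        · fin_cases i <;> assumption
        · exact h2
    have hprod : ∏ i, μ (s i) = μ ((V 0)⁻¹' S0) * (μ ((V 1)⁻¹' S1) * μ (σ⁻¹' T)) := by
      rw [Fintype.prod_sum_type]
      simp [hs, Fin.prod_univ_two, mul_assoc]
    rw [← hint, h, hprod]
  -- law of V
  have PV : ∀ (i : Fin 2) (c : ℝ), μ ((V i)⁻¹' Set.Iic c) = ENNReal.ofReal (gcl c) := by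
    intro i c
    rw [← Measure.map_apply (hVm i) measurableSet_Iic, hVlaw i, restrict_Iic_gcl]
  -- law of σ on finsets
  have Pσ : ∀ s : Finset (Equiv.Perm (Fin k)),
      μ (σ⁻¹' ↑s) = (s.card : ENNReal) * ((Nat.factorial k : ENNReal))⁻¹ := by
    intro s
    have hdec : σ⁻¹' ↑s = ⋃ π ∈ s, σ⁻¹' {π} := by
      ext ω
      simp only [Set.mem_preimage, Finset.mem_coe, Set.mem_iUnion, Set.mem_singleton_iff]
      constructor
      · intro h; exact ⟨σ ω, h, rfl⟩
      · rintro ⟨π, hπ, h⟩; rw [h]; exact hπ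
    have hdisj : (↑s : Set (Equiv.Perm (Fin k))).PairwiseDisjoint
        (fun π => σ⁻¹' {π}) := by
      intro π _ π' _ hne
      refine Set.disjoint_left.2 fun ω h1 h2 => hne ?_
      have h1' : σ ω = π := h1
      have h2' : σ ω = π' := h2
      rw [← h1', h2']
    have hmeas : ∀ π ∈ s, MeasurableSet (σ⁻¹' ({π} : Set (Equiv.Perm (Fin k)))) :=
      fun π _ => hσm MeasurableSpace.measurableSet_top
    rw [hdec, measure_biUnion_finset hdisj hmeas]
    have : ∀ π ∈ s, μ (σ⁻¹' ({π} : Set (Equiv.Perm (Fin k))))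
        = ((Nat.factorial k : ENNReal))⁻¹ := by
      intro π _
      have : σ⁻¹' ({π} : Set (Equiv.Perm (Fin k))) = {ω | σ ω = π} := rfl
      rw [this, hσlaw π]
    rw [Finset.sum_congr rfl this, Finset.sum_const, nsmul_eq_mul]
  -- coe of filters
  have hcoe : ∀ p : Equiv.Perm (Fin k) → Prop, ∀ inst : DecidablePred p,
      ((univ.filter p : Finset (Equiv.Perm (Fin k))) : Set (Equiv.Perm (Fin k))) = {π | p π} := by
    intro p inst
    ext π
    simp
  -- key mixed identity
  have key : ∀ (j : Fin 2) (c : ℝ) (T : Set (Equiv.Perm (Fin k))),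
      μ ((V j)⁻¹' Set.Iic c ∩ σ⁻¹' T) = ENNReal.ofReal (gcl c) * μ (σ⁻¹' T) := by
    intro j c T
    fin_cases j
    · have h := master (Set.Iic c) Set.univ measurableSet_Iic MeasurableSet.univ T
      simp only [Set.preimage_univ, Set.univ_inter, measure_univ, one_mul] at h
      rw [PV _ c] at h
      exact h
    · have h := master Set.univ (Set.Iic c) MeasurableSet.univ measurableSet_Iic T
      simp only [Set.preimage_univ, Set.univ_inter, measure_univ, one_mul] at h
      rw [PV _ c] at h
      exact h
  constructor
  · -- part 1 : marginals
    intro j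
    set e := ![a, b] j with he
    have hσe : Measurable fun ω => ((σ ω e : ℕ) : ℝ) := by
      have : Measurable fun π : Equiv.Perm (Fin k) => ((π e : ℕ) : ℝ) := measurable_from_top
      exact this.comp hσm
    have hUm : Measurable fun ω => (((σ ω e : ℕ) : ℝ) + V j ω) / k :=
      (hσe.add (hVm j)).div_const _
    have : IsProbabilityMeasure (μ.map fun ω => (((σ ω e : ℕ) : ℝ) + V j ω) / k) :=
      Measure.isProbabilityMeasure_map hUm.aemeasurable
    refine Measure.ext_of_Iic _ _ (fun t => ?_)
    rw [Measure.map_apply hUm measurableSet_Iic, restrict_Iic_gcl]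
    have hdec : (fun ω => (((σ ω e : ℕ) : ℝ) + V j ω) / k) ⁻¹' Set.Iic t
        = ⋃ m ∈ (univ : Finset (Fin k)),
            ((V j)⁻¹' Set.Iic ((k:ℝ) * t - ((m : ℕ) : ℝ)) ∩ σ⁻¹' {π | π e = m}) := by
      ext ω
      simp only [Set.mem_preimage, Set.mem_Iic, Set.mem_iUnion, Set.mem_inter_iff,
        Set.mem_setOf_eq, Finset.mem_univ, true_and, exists_prop]
      constructor
      · intro h
        refine ⟨σ ω e, ?_, rfl⟩
        have h2 := (div_le_iff₀ hk0).1 h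
        linarith
      · rintro ⟨m, hVle, hm⟩
        rw [div_le_iff₀ hk0, hm]
        linarith
    rw [hdec]
    have hdisj : (↑(univ : Finset (Fin k)) : Set (Fin k)).PairwiseDisjoint
        (fun m => (V j)⁻¹' Set.Iic ((k:ℝ) * t - ((m : ℕ) : ℝ)) ∩ σ⁻¹' {π | π e = m}) := by
      intro m _ m' _ hne
      refine Set.disjoint_left.2 fun ω h1 h2 => hne ?_
      have h1' : σ ω e = m := h1.2
      have h2' : σ ω e = m' := h2.2
      rw [← h1', h2']
    have hmeas : ∀ m ∈ (univ : Finset (Fin k)), MeasurableSet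
        ((V j)⁻¹' Set.Iic ((k:ℝ) * t - ((m : ℕ) : ℝ)) ∩ σ⁻¹' {π | π e = m}) :=
      fun m _ => ((hVm j) measurableSet_Iic).inter (hσm MeasurableSpace.measurableSet_top)
    rw [measure_biUnion_finset hdisj hmeas]
    have hterm : ∀ m ∈ (univ : Finset (Fin k)),
        μ ((V j)⁻¹' Set.Iic ((k:ℝ) * t - ((m : ℕ) : ℝ)) ∩ σ⁻¹' {π | π e = m})
          = ENNReal.ofReal (gcl ((k:ℝ) * t - ((m : ℕ) : ℝ))) * ((k : ENNReal))⁻¹ := by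
      intro m _
      rw [key j _ _]
      congr 1
      have hset : ({π : Equiv.Perm (Fin k) | π e = m})
          = ↑(univ.filter fun π : Equiv.Perm (Fin k) => π e = m) := (hcoe _ _).symm
      rw [hset, Pσ]
      -- now : (card) * (k!)⁻¹ = k⁻¹
      have hN := na_mul (α := Fin k) e m
      rw [Fintype.card_fin] at hN
      set N := (univ.filter fun π : Equiv.Perm (Fin k) => π e = m).card with hNdef
      have hN0 : N ≠ 0 := by
        intro h0
        rw [h0, zero_mul] at hN
        exact (Nat.factorial_pos k).ne' hN.symm
      have hcast : ((N : ENNReal) * (k : ℕ)) = ((Nat.factorial k : ℕ) : ENNReal) := by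
        exact_mod_cast congrArg (Nat.cast : ℕ → ENNReal) hN
      rw [← hcast, ENNReal.mul_inv (Or.inl (by exact_mod_cast hN0)) (Or.inl (ENNReal.natCast_ne_top N)),
        ← mul_assoc, ENNReal.mul_inv_cancel (by exact_mod_cast hN0) (ENNReal.natCast_ne_top N), one_mul]
    rw [Finset.sum_congr rfl hterm, ← Finset.sum_mul]
    have hsum : ∑ m : Fin k, ENNReal.ofReal (gcl ((k:ℝ) * t - ((m : ℕ) : ℝ)))
        = ENNReal.ofReal ((k:ℝ) * gcl t) := by
      rw [← ENNReal.ofReal_sum_of_nonneg (fun m _ => gcl_nonneg _)]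
      congr 1
      rw [Fin.sum_univ_eq_sum_range (fun m => gcl ((k:ℝ) * t - (m:ℝ))) k]
      exact sum_gcl_scaled k (by omega) t
    rw [hsum, ENNReal.ofReal_mul hk0.le, ENNReal.ofReal_natCast, mul_comm ((k:ENNReal)) _,
      mul_assoc, ENNReal.mul_inv_cancel (by exact_mod_cast (by omega : k ≠ 0)) (ENNReal.natCast_ne_top k), mul_one]
  · -- part 2 : joint CDF
    intro u v hu huv hv1
    set x := (k:ℝ) * u with hx
    set y := (k:ℝ) * v with hy
    have hx0 : 0 ≤ x := mul_nonneg hk0.le hu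
    have hxy : x ≤ y := by
      rw [hx, hy]; exact mul_le_mul_of_nonneg_left huv hk0.le
    have hy0 : 0 ≤ y := le_trans hx0 hxy
    have hyk : y ≤ k := by
      rw [hy]
      calc (k:ℝ) * v ≤ (k:ℝ) * 1 := mul_le_mul_of_nonneg_left hv1 hk0.le
        _ = k := mul_one _
    have hxk : x ≤ k := le_trans hxy hyk
    set c : ℝ := ((k:ℝ) * ((k:ℝ) - 1))⁻¹ with hc
    -- decomposition of the event
    have hdec : {ω | (((σ ω a : ℕ) : ℝ) + V 0 ω) / k ≤ u ∧
              (((σ ω b : ℕ) : ℝ) + V 1 ω) / k ≤ v}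
        = ⋃ p ∈ (univ : Finset (Fin k × Fin k)),
            ((V 0)⁻¹' Set.Iic (x - ((p.1 : ℕ) : ℝ)) ∩ ((V 1)⁻¹' Set.Iic (y - ((p.2 : ℕ) : ℝ))
              ∩ σ⁻¹' {π | π a = p.1 ∧ π b = p.2})) := by
      ext ω
      simp only [Set.mem_setOf_eq, Set.mem_iUnion, Finset.mem_univ, true_and, exists_prop,
        Set.mem_inter_iff, Set.mem_preimage, Set.mem_Iic]
      constructor
      · rintro ⟨h1, h2⟩
        refine ⟨(σ ω a, σ ω b), ?_, ?_, rfl, rfl⟩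
        · have := (div_le_iff₀ hk0).1 h1
          rw [hx]; linarith
        · have := (div_le_iff₀ hk0).1 h2
          rw [hy]; linarith
      · rintro ⟨p, hV0, hV1, ha', hb'⟩
        constructor
        · rw [div_le_iff₀ hk0, ha']
          rw [hx] at hV0; linarith
        · rw [div_le_iff₀ hk0, hb']
          rw [hy] at hV1; linarith
    rw [hdec]
    have hdisj : (↑(univ : Finset (Fin k × Fin k)) : Set (Fin k × Fin k)).PairwiseDisjoint
        (fun p => (V 0)⁻¹' Set.Iic (x - ((p.1 : ℕ) : ℝ)) ∩ ((V 1)⁻¹' Set.Iic (y - ((p.2 : ℕ) : ℝ))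
              ∩ σ⁻¹' {π | π a = p.1 ∧ π b = p.2})) := by
      intro p _ q _ hne
      refine Set.disjoint_left.2 fun ω h1 h2 => hne ?_
      obtain ⟨-, -, ha1, hb1⟩ := h1
      obtain ⟨-, -, ha2, hb2⟩ := h2
      have : p = q := by
        ext
        · rw [← ha1, ha2]
        · rw [← hb1, hb2]
      exact this
    have hmeas : ∀ p ∈ (univ : Finset (Fin k × Fin k)), MeasurableSet
        ((V 0)⁻¹' Set.Iic (x - ((p.1 : ℕ) : ℝ)) ∩ ((V 1)⁻¹' Set.Iic (y - ((p.2 : ℕ) : ℝ))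
              ∩ σ⁻¹' {π | π a = p.1 ∧ π b = p.2})) :=
      fun p _ => ((hVm 0) measurableSet_Iic).inter (((hVm 1) measurableSet_Iic).inter
        (hσm MeasurableSpace.measurableSet_top))
    rw [measure_biUnion_finset hdisj hmeas]
    -- value of each piece
    have hterm : ∀ p ∈ (univ : Finset (Fin k × Fin k)),
        μ ((V 0)⁻¹' Set.Iic (x - ((p.1 : ℕ) : ℝ)) ∩ ((V 1)⁻¹' Set.Iic (y - ((p.2 : ℕ) : ℝ))
              ∩ σ⁻¹' {π | π a = p.1 ∧ π b = p.2}))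
          = ENNReal.ofReal (gcl (x - ((p.1 : ℕ) : ℝ))) *
              (ENNReal.ofReal (gcl (y - ((p.2 : ℕ) : ℝ))) *
              (((univ.filter fun π : Equiv.Perm (Fin k) => π a = p.1 ∧ π b = p.2).card : ENNReal)
                * ((Nat.factorial k : ENNReal))⁻¹)) := by
      intro p _
      rw [master _ _ measurableSet_Iic measurableSet_Iic _, PV, PV]
      congr 2
      have hset : ({π : Equiv.Perm (Fin k) | π a = p.1 ∧ π b = p.2})
          = ↑(univ.filter fun π : Equiv.Perm (Fin k) => π a = p.1 ∧ π b = p.2) := (hcoe _ _).symm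
      rw [hset, Pσ]
    rw [Finset.sum_congr rfl hterm]
    have hne_top : ∀ p ∈ (univ : Finset (Fin k × Fin k)),
        ENNReal.ofReal (gcl (x - ((p.1 : ℕ) : ℝ))) *
              (ENNReal.ofReal (gcl (y - ((p.2 : ℕ) : ℝ))) *
              (((univ.filter fun π : Equiv.Perm (Fin k) => π a = p.1 ∧ π b = p.2).card : ENNReal)
                * ((Nat.factorial k : ENNReal))⁻¹)) ≠ ⊤ := by
      intro p _
      exact ENNReal.mul_ne_top ENNReal.ofReal_ne_top (ENNReal.mul_ne_top ENNReal.ofReal_ne_top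
        (ENNReal.mul_ne_top (ENNReal.natCast_ne_top _) (ENNReal.inv_ne_top.2 hfne)))
    rw [ENNReal.toReal_sum hne_top]
    -- real coefficient
    have hcoef : ∀ p : Fin k × Fin k,
        (((univ.filter fun π : Equiv.Perm (Fin k) => π a = p.1 ∧ π b = p.2).card : ℝ)
          * ((Nat.factorial k : ℝ))⁻¹) = if p.1 = p.2 then 0 else c := by
      intro p
      by_cases hp : p.1 = p.2
      · rw [if_pos hp]
        have : (univ.filter fun π : Equiv.Perm (Fin k) => π a = p.1 ∧ π b = p.2).card = 0 := by
          rw [hp]; exact nab_zero hab p.2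
        rw [this]; simp
      · rw [if_neg hp]
        have hN := nab_mul (α := Fin k) hab hp
        rw [Fintype.card_fin] at hN
        have hcast : ((univ.filter fun π : Equiv.Perm (Fin k) => π a = p.1 ∧ π b = p.2).card : ℝ)
            * ((k:ℝ) * ((k:ℝ) - 1)) = (Nat.factorial k : ℝ) := by
          have h1 : (((k * (k-1)) : ℕ) : ℝ) = (k:ℝ) * ((k:ℝ) - 1) := by
            push_cast [Nat.cast_sub (by omega : 1 ≤ k)]
            ring
          rw [← h1]
          exact_mod_cast congrArg (Nat.cast : ℕ → ℝ) hN
        have hfr : (Nat.factorial k : ℝ) ≠ 0 := by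
          exact_mod_cast (Nat.factorial_pos k).ne'
        have hkk : (k:ℝ) * ((k:ℝ) - 1) ≠ 0 := mul_ne_zero hkne hk1ne
        rw [hc]
        field_simp
        linarith [hcast]
    -- toReal of terms and final sum
    have htr : ∀ p ∈ (univ : Finset (Fin k × Fin k)),
        (ENNReal.ofReal (gcl (x - ((p.1 : ℕ) : ℝ))) *
              (ENNReal.ofReal (gcl (y - ((p.2 : ℕ) : ℝ))) *
              (((univ.filter fun π : Equiv.Perm (Fin k) => π a = p.1 ∧ π b = p.2).card : ENNReal)
                * ((Nat.factorial k : ENNReal))⁻¹))).toReal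
        = c * (gcl (x - ((p.1 : ℕ) : ℝ)) * gcl (y - ((p.2 : ℕ) : ℝ)))
          - (if p.1 = p.2 then c * (gcl (x - ((p.1 : ℕ) : ℝ)) * gcl (y - ((p.2 : ℕ) : ℝ))) else 0) := by
      intro p _
      rw [ENNReal.toReal_mul, ENNReal.toReal_mul, ENNReal.toReal_mul,
        ENNReal.toReal_ofReal (gcl_nonneg _), ENNReal.toReal_ofReal (gcl_nonneg _),
        ENNReal.toReal_inv, ENNReal.toReal_natCast, ENNReal.toReal_natCast, hcoef p]
      by_cases hp : p.1 = p.2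
      · rw [if_pos hp, if_pos hp]; ring
      · rw [if_neg hp, if_neg hp]; ring
    rw [Finset.sum_congr rfl htr, Finset.sum_sub_distrib]
    have hS1 : ∑ p : Fin k × Fin k, c * (gcl (x - ((p.1 : ℕ) : ℝ)) * gcl (y - ((p.2 : ℕ) : ℝ)))
        = c * (x * y) := by
      rw [← Finset.mul_sum]
      congr 1
      rw [Fintype.sum_prod_type]
      have : ∀ m : Fin k, ∑ n : Fin k, gcl (x - ((m : ℕ) : ℝ)) * gcl (y - ((n : ℕ) : ℝ))
          = gcl (x - ((m : ℕ) : ℝ)) * y := by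
        intro m
        rw [← Finset.mul_sum]
        congr 1
        rw [Fin.sum_univ_eq_sum_range (fun n => gcl (y - (n:ℝ))) k]
        exact sum_gcl k hy0 hyk
      rw [Finset.sum_congr rfl (fun m _ => this m), ← Finset.sum_mul]
      rw [Fin.sum_univ_eq_sum_range (fun m => gcl (x - (m:ℝ))) k, sum_gcl k hx0 hxk]
    have hS2 : ∑ p : Fin k × Fin k,
        (if p.1 = p.2 then c * (gcl (x - ((p.1 : ℕ) : ℝ)) * gcl (y - ((p.2 : ℕ) : ℝ))) else 0)
        = c * ((⌊x⌋ : ℝ) + Int.fract x * gcl (y - (⌊x⌋ : ℝ))) := by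
      rw [Fintype.sum_prod_type]
      have hrow : ∀ m : Fin k, ∑ n : Fin k,
          (if m = n then c * (gcl (x - ((m : ℕ) : ℝ)) * gcl (y - ((n : ℕ) : ℝ))) else 0)
          = c * (gcl (x - ((m : ℕ) : ℝ)) * gcl (y - ((m : ℕ) : ℝ))) := by
        intro m
        rw [Finset.sum_ite_eq (univ : Finset (Fin k)) m
          (fun n => c * (gcl (x - ((m : ℕ) : ℝ)) * gcl (y - ((n : ℕ) : ℝ))))]
        simp
      rw [Finset.sum_congr rfl (fun m _ => hrow m), ← Finset.mul_sum]
      congr 1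
      rw [Fin.sum_univ_eq_sum_range (fun m => gcl (x - (m:ℝ)) * gcl (y - (m:ℝ))) k]
      exact sum_gcl_mul k hx0 hxy hyk
    rw [hS1, hS2]
    -- final case analysis
    by_cases hY : ⌊y⌋ = 0
    · rw [if_pos hY]
      have hy1 : y < 1 := by
        have := Int.lt_floor_add_one y
        rw [hY] at this
        simpa using this
      have hX : ⌊x⌋ = 0 := by
        apply Int.floor_eq_zero_iff.2
        exact ⟨hx0, lt_of_le_of_lt hxy hy1⟩
      have hfr : Int.fract x = x := Int.fract_eq_self.2 ⟨hx0, lt_of_le_of_lt hxy hy1⟩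
      rw [hX, hfr]
      have : gcl (y - ((0:ℤ) : ℝ)) = y := by
        rw [Int.cast_zero, sub_zero]
        exact gcl_of_mem hy0 hy1.le
      rw [this]
      push_cast
      ring
    · rw [if_neg hY]
      by_cases hXY : ⌊x⌋ = ⌊y⌋
      · rw [if_pos hXY]
        have h1 : y - (⌊x⌋ : ℝ) = Int.fract y := by
          rw [hXY]; exact (Int.self_sub_floor y).symm
        have h2 : gcl (y - (⌊x⌋ : ℝ)) = Int.fract y := by
          rw [h1]
          exact gcl_of_mem (Int.fract_nonneg y) (Int.fract_lt_one y).le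
        rw [h2]
        have h3 : (⌊x⌋ : ℝ) = x - Int.fract x := (Int.self_sub_fract x).symm
        rw [h3, hc]
        field_simp
        linarith [Int.floor_add_fract ((k:ℝ)*u)]
      · rw [if_neg hXY]
        have hlt : ⌊x⌋ < ⌊y⌋ := lt_of_le_of_ne (Int.floor_le_floor hxy) hXY
        have h1 : (1:ℝ) ≤ y - (⌊x⌋ : ℝ) := by
          have ha1 : (⌊x⌋ : ℝ) + 1 ≤ (⌊y⌋ : ℝ) := by exact_mod_cast Int.add_one_le_iff.2 hlt
          have ha2 : (⌊y⌋ : ℝ) ≤ y := Int.floor_le y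
          linarith
        rw [gcl_of_one_le h1, mul_one]
        have h2 : (⌊x⌋ : ℝ) + Int.fract x = x := Int.floor_add_fract x
        rw [h2, hc, hx]
        field_simp
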